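/- Let A ∈ ℝ^{m×N} with rank(A) = m, y ∈ ℝ^m, p ≥ 2 and α > 0. Then ‖q*‖_∞ ≤ ‖m*‖₁ ≤ (√N/σ_min(A))‖y‖₂. -/

import Mathlib

noncomputable section

/-- The Euclidean (ℓ²) norm of a vector in ℝⁿ. -/
def norm2 {n : ℕ} (v : Fin n → ℝ) : ℝ := Real.sqrt (∑ i, v i ^ 2)

/-- The ℓ¹ norm of a vector in ℝⁿ. -/
def norm1 {n : ℕ} (v : Fin n → ℝ) : ℝ := ∑ i, |v i|

/-- The sup (ℓ^∞) norm of a vector in ℝⁿ. -/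
def normInf {n : ℕ} (v : Fin n → ℝ) : ℝ := ⨆ i, |v i|

/-- The ℓʳ (quasi-)norm ‖v‖_r = (∑ |v i|^r)^(1/r). -/
def normr {n : ℕ} (r : ℝ) (v : Fin n → ℝ) : ℝ := (∑ i, |v i| ^ r) ^ (1 / r)

/-- The smallest singular value of `A`, via `σ_min(A) = inf {‖Aᵀ z‖₂ : ‖z‖₂ = 1}`. -/
def sigmaMin {m N : ℕ} (A : Matrix (Fin m) (Fin N) ℝ) : ℝ :=
  sInf {c : ℝ | ∃ z : Fin m → ℝ, norm2 z = 1 ∧ c = norm2 (A.transpose.mulVec z)}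

/-- The entropy H(z) = −∑ |z i| ln |z i| (with the convention 0 · ln 0 = 0,
which holds automatically since `Real.log 0 = 0`). -/
def Hent {n : ℕ} (z : Fin n → ℝ) : ℝ := -∑ i, |z i| * Real.log |z i|

/-- The set 𝒰(A,y) of basis-pursuit minimizers: minimizers of ‖·‖₁ subject to Az = y. -/
def BPset {m N : ℕ} (A : Matrix (Fin m) (Fin N) ℝ) (y : Fin m → ℝ) : Set (Fin N → ℝ) :=
  {z | A.mulVec z = y ∧ ∀ w : Fin N → ℝ, A.mulVec w = y → norm1 z ≤ norm1 w}

/-- The basis-pursuit minimum value R(A,y) = min {‖z‖₁ : Az = y}. -/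
def Rmin {m N : ℕ} (A : Matrix (Fin m) (Fin N) ℝ) (y : Fin m → ℝ) : ℝ :=
  sInf (norm1 '' {z : Fin N → ℝ | A.mulVec z = y})

/-- The function h_p: h₂(t) = 2 sinh t, and for p > 2,
h_p(t) = (1−t)^{−p/(p−2)} − (1+t)^{−p/(p−2)}. -/
def hfun (p t : ℝ) : ℝ :=
  if p = 2 then 2 * Real.sinh t
  else (1 - t) ^ (-(p / (p - 2))) - (1 + t) ^ (-(p / (p - 2)))

/-- The natural domain of h_p: all of ℝ when p = 2, and (−1,1) when p > 2. -/
def hDomain (p : ℝ) : Set ℝ := if p = 2 then Set.univ else Set.Ioo (-1) 1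

/-- The inverse h_p^{-1} : ℝ → ℝ of h_p (h_p is a strictly increasing bijection
from its domain onto ℝ). -/
def hInv (p u : ℝ) : ℝ := Function.invFunOn (hfun p) (hDomain p) u

/-- q_p(u) = ∫₀ᵘ h_p^{−1}(v) dv. -/
def qfun (p u : ℝ) : ℝ := ∫ v in (0:ℝ)..u, hInv p v

/-- Q_p(z) = α^p ∑ q_p(z i / α^p). -/
def Qfun {n : ℕ} (p α : ℝ) (z : Fin n → ℝ) : ℝ := α ^ p * ∑ i, qfun p (z i / α ^ p)

/-- g_p: g₂(u) = |u| ln(|u|/e) (with g₂(0) = 0), and for p > 2,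
g_p(u) = |u| − (p/2)|u|^{2/p}. -/
def gfun (p u : ℝ) : ℝ :=
  if p = 2 then (if u = 0 then 0 else |u| * Real.log (|u| / Real.exp 1))
  else |u| - p / 2 * |u| ^ (2 / p)

/-- G_p(z) = α^p ∑ g_p(z i / α^p). -/
def Gfun {n : ℕ} (p α : ℝ) (z : Fin n → ℝ) : ℝ := α ^ p * ∑ i, gfun p (z i / α ^ p)

/-- The predictor ψ_θ = θ₊^p − θ₋^p (componentwise powers), for a parameter vector
θ = (θ₊, θ₋) ∈ ℝ^{2N}. -/
def psiOf {N : ℕ} (p : ℝ) (θ : EuclideanSpace ℝ (Fin N ⊕ Fin N)) : Fin N → ℝ :=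
  fun i => θ (Sum.inl i) ^ p - θ (Sum.inr i) ^ p

/-- The squared loss L(θ) = (1/2)‖A ψ_θ − y‖₂². -/
def lossFun {m N : ℕ} (A : Matrix (Fin m) (Fin N) ℝ) (y : Fin m → ℝ) (p : ℝ)
    (θ : EuclideanSpace ℝ (Fin N ⊕ Fin N)) : ℝ :=
  (1 / 2) * ∑ j, (A.mulVec (psiOf p θ) j - y j) ^ 2

end

set_option linter.unusedVariables false
set_option linter.unusedSectionVars false
set_option linter.unreachableTactic false
set_option linter.unusedTactic false
set_option linter.unnecessarySimpa false

lemma hfun_neg (p t : ℝ) : hfun p (-t) = -hfun p t := by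
  unfold hfun
  split
  · rw [Real.sinh_neg]; ring
  · ring_nf

lemma hfun_zero (p : ℝ) : hfun p 0 = 0 := by
  unfold hfun
  split
  · simp
  · norm_num

lemma zero_mem_hDomain (p : ℝ) : (0:ℝ) ∈ hDomain p := by
  unfold hDomain; split <;> simp

lemma neg_mem_hDomain {p t : ℝ} (h : t ∈ hDomain p) : -t ∈ hDomain p := by
  unfold hDomain at *
  split at h <;> simp_all [Set.mem_Ioo]
  all_goals first | (constructor <;> linarith) | linarith

lemma exponent_neg {p : ℝ} (hp : 2 < p) : -(p / (p - 2)) < 0 := by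
  have : 0 < p / (p - 2) := div_pos (by linarith) (by linarith)
  linarith

lemma hfun_strictMonoOn {p : ℝ} (hp : 2 ≤ p) : StrictMonoOn (hfun p) (hDomain p) := by
  unfold hfun hDomain
  by_cases h2 : p = 2
  · simp only [h2, if_pos rfl]
    intro a _ b _ hab
    have := Real.sinh_lt_sinh.mpr hab
    simpa using by linarith [Real.sinh_lt_sinh.mpr hab]
  · have hp2 : 2 < p := lt_of_le_of_ne hp (Ne.symm h2)
    have he : -(p / (p - 2)) < 0 := exponent_neg hp2
    simp only [if_neg h2]
    intro a ha b hb hab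
    rw [Set.mem_Ioo] at ha hb
    have h1 : (1 - a) ^ (-(p / (p - 2))) < (1 - b) ^ (-(p / (p - 2))) :=
      Real.rpow_lt_rpow_of_neg (by linarith [hb.2]) (by linarith) he
    have h2' : (1 + a) ^ (-(p / (p - 2))) > (1 + b) ^ (-(p / (p - 2))) :=
      Real.rpow_lt_rpow_of_neg (by linarith [ha.1]) (by linarith) he
    linarith

lemma hfun_continuousOn {p : ℝ} (hp2 : p ≠ 2) : ContinuousOn (hfun p) (Set.Ioo (-1:ℝ) 1) := by
  unfold hfun
  simp only [if_neg hp2]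
  intro t ht
  rw [Set.mem_Ioo] at ht
  apply ContinuousWithinAt.sub
  · exact (Real.continuousAt_rpow_const _ _ (Or.inl (by intro h; simp only [Pi.sub_apply, id] at h; nlinarith [ht.2]))).comp
      (continuous_const.sub continuous_id).continuousAt |>.continuousWithinAt
  · exact (Real.continuousAt_rpow_const _ _ (Or.inl (by intro h; simp only [Pi.add_apply, id] at h; nlinarith [ht.1]))).comp
      (continuous_const.add continuous_id).continuousAt |>.continuousWithinAt

lemma hfun_big {p : ℝ} (hp : 2 < p) (v : ℝ) (hv : 0 ≤ v) :
    ∃ t, 0 ≤ t ∧ t < 1 ∧ v ≤ hfun p t := by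
  set e : ℝ := -(p / (p - 2)) with he_def
  have he : e < 0 := by
    have : 0 < p / (p - 2) := div_pos (by linarith) (by linarith)
    simp [he_def]; linarith
  set M : ℝ := v + 1 with hM
  have hM1 : 1 ≤ M := by linarith
  set x : ℝ := M ^ (1/e) with hx
  have hx0 : 0 < x := Real.rpow_pos_of_pos (by linarith) _
  have hx1 : x ≤ 1 := Real.rpow_le_one_of_one_le_of_nonpos hM1 (by
    apply le_of_lt; exact one_div_neg.mpr he)
  have hxe : x ^ e = M := by
    rw [hx, ← Real.rpow_mul (by linarith : (0:ℝ) ≤ M), one_div,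
      inv_mul_cancel₀ (ne_of_lt he), Real.rpow_one]
  refine ⟨1 - x, by linarith, by linarith, ?_⟩
  unfold hfun
  have hp2 : p ≠ 2 := by linarith
  simp only [if_neg hp2, ← he_def]
  have h1 : (1 - (1 - x)) = x := by ring
  rw [h1, hxe]
  have h2 : (1 + (1 - x)) ^ e ≤ 1 :=
    Real.rpow_le_one_of_one_le_of_nonpos (by linarith) (le_of_lt he)
  linarith

lemma hfun_surj_nonneg {p : ℝ} (hp : 2 ≤ p) (v : ℝ) (hv : 0 ≤ v) :
    ∃ t ∈ hDomain p, hfun p t = v := by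
  by_cases h2 : p = 2
  · obtain ⟨t, ht⟩ := Real.sinh_surjective (v / 2)
    exact ⟨t, by simp [hDomain, h2], by simp [hfun, h2, ht]; linarith⟩
  · have hp2 : 2 < p := lt_of_le_of_ne hp (Ne.symm h2)
    obtain ⟨t, ht0, ht1, htv⟩ := hfun_big hp2 v hv
    have hsub : Set.Icc (0:ℝ) t ⊆ Set.Ioo (-1:ℝ) 1 := fun s hs =>
      ⟨by linarith [hs.1], by linarith [hs.2]⟩
    have hcont : ContinuousOn (hfun p) (Set.Icc 0 t) :=
      (hfun_continuousOn h2).mono hsub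
    have := intermediate_value_Icc ht0 hcont
    have hvmem : v ∈ Set.Icc (hfun p 0) (hfun p t) := by
      rw [hfun_zero]; exact ⟨hv, htv⟩
    obtain ⟨s, hs, hsv⟩ := this hvmem
    exact ⟨s, by simpa [hDomain, h2] using hsub hs, hsv⟩

lemma hfun_surj {p : ℝ} (hp : 2 ≤ p) (v : ℝ) : ∃ t ∈ hDomain p, hfun p t = v := by
  rcases le_or_gt 0 v with hv | hv
  · exact hfun_surj_nonneg hp v hv
  · obtain ⟨t, ht, htv⟩ := hfun_surj_nonneg hp (-v) (by linarith)
    refine ⟨-t, ?_, by rw [hfun_neg, htv]; ring⟩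
    unfold hDomain at *
    split at ht <;> simp_all [Set.mem_Ioo]
    all_goals first | (constructor <;> linarith) | linarith

section
variable {p : ℝ} (hp : 2 ≤ p)
include hp

lemma hInv_mem (v : ℝ) : hInv p v ∈ hDomain p :=
  Function.invFunOn_mem (hfun_surj hp v)

lemma hfun_hInv (v : ℝ) : hfun p (hInv p v) = v :=
  Function.invFunOn_eq (hfun_surj hp v)

lemma hInv_hfun {t : ℝ} (ht : t ∈ hDomain p) : hInv p (hfun p t) = t :=
  ((hfun_strictMonoOn hp).injOn).leftInvOn_invFunOn ht

lemma hInv_strictMono : StrictMono (hInv p) := by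
  intro v w hvw
  by_contra hle
  push_neg at hle
  have := (hfun_strictMonoOn hp).monotoneOn (hInv_mem hp w) (hInv_mem hp v) hle
  rw [hfun_hInv hp, hfun_hInv hp] at this
  linarith

lemma hInv_mono : Monotone (hInv p) := (hInv_strictMono hp).monotone

lemma hInv_zero : hInv p 0 = 0 := by
  have := hInv_hfun hp (zero_mem_hDomain p)
  rwa [hfun_zero] at this

lemma hInv_neg (v : ℝ) : hInv p (-v) = -hInv p v := by
  have h1 : hfun p (-(hInv p v)) = -v := by rw [hfun_neg, hfun_hInv hp]
  rw [← h1, hInv_hfun hp (neg_mem_hDomain (hInv_mem hp v))]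

lemma hInv_nonneg {v : ℝ} (hv : 0 ≤ v) : 0 ≤ hInv p v := by
  rw [← hInv_zero hp]; exact hInv_mono hp hv

lemma hInv_intervalIntegrable (a b : ℝ) : IntervalIntegrable (hInv p) MeasureTheory.volume a b :=
  (hInv_mono hp).intervalIntegrable

lemma qfun_zero : qfun p 0 = 0 := by unfold qfun; simp

lemma qfun_neg (u : ℝ) : qfun p (-u) = qfun p u := by
  unfold qfun
  have h1 : ∫ v in (0:ℝ)..u, hInv p (-v) = ∫ v in (-u)..(0:ℝ), hInv p v := by
    simpa using intervalIntegral.integral_comp_neg (a := (0:ℝ)) (b := u) (fun v => hInv p v)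
  have h2 : ∫ v in (0:ℝ)..u, hInv p (-v) = -∫ v in (0:ℝ)..u, hInv p v := by
    simp only [hInv_neg hp]
    exact intervalIntegral.integral_neg
  rw [intervalIntegral.integral_symm, ← h1, h2, neg_neg]

lemma qfun_sub (a b : ℝ) : qfun p b - qfun p a = ∫ v in a..b, hInv p v := by
  unfold qfun
  have := intervalIntegral.integral_add_adjacent_intervals
    (hInv_intervalIntegrable hp 0 a) (hInv_intervalIntegrable hp a b)
  linarith

lemma qfun_strictMonoOn : StrictMonoOn (qfun p) (Set.Ici (0:ℝ)) := by
  intro a ha b hb hab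
  rw [Set.mem_Ici] at ha
  have key : 0 < qfun p b - qfun p a := by
    rw [qfun_sub hp]
    set c : ℝ := (a + b) / 2 with hc
    have hac : a < c := by rw [hc]; linarith
    have hcb : c < b := by rw [hc]; linarith
    have hc0 : 0 < c := by linarith
    rw [← intervalIntegral.integral_add_adjacent_intervals
      (hInv_intervalIntegrable hp a c) (hInv_intervalIntegrable hp c b)]
    have h1 : 0 ≤ ∫ v in a..c, hInv p v := by
      apply intervalIntegral.integral_nonneg (le_of_lt hac)
      intro u hu
      exact hInv_nonneg hp (le_trans ha hu.1)
    have h2 : (b - c) * hInv p c ≤ ∫ v in c..b, hInv p v := by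
      have := intervalIntegral.integral_mono_on (le_of_lt hcb)
        (intervalIntegrable_const (c := hInv p c)) (hInv_intervalIntegrable hp c b)
        (fun u hu => hInv_mono hp hu.1)
      simpa using this
    have h3 : 0 < hInv p c := by
      rw [← hInv_zero hp]
      exact hInv_strictMono hp hc0
    nlinarith
  linarith

lemma qfun_monotoneOn : MonotoneOn (qfun p) (Set.Ici (0:ℝ)) :=
  (qfun_strictMonoOn hp).monotoneOn

lemma qfun_nonneg (u : ℝ) : 0 ≤ qfun p u := by
  rcases le_or_gt 0 u with hu | hu
  · rw [← qfun_zero hp]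
    exact qfun_monotoneOn hp (Set.mem_Ici.mpr (le_refl _)) hu hu
  · rw [← qfun_neg hp, ← qfun_zero hp]
    exact qfun_monotoneOn hp (Set.mem_Ici.mpr (le_refl _)) (by simp; linarith) (by linarith)

lemma qfun_abs (u : ℝ) : qfun p |u| = qfun p u := by
  rcases abs_cases u with ⟨h, _⟩ | ⟨h, _⟩
  · rw [h]
  · rw [h, qfun_neg hp]

lemma qfun_superadd {a b : ℝ} (ha : 0 ≤ a) (hb : 0 ≤ b) :
    qfun p a + qfun p b ≤ qfun p (a + b) := by
  have key : qfun p b ≤ qfun p (a + b) - qfun p a := by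
    rw [qfun_sub hp]
    have h1 : ∫ v in a..(a+b), hInv p v = ∫ v in (0:ℝ)..b, hInv p (v + a) := by
      rw [intervalIntegral.integral_comp_add_right (fun v => hInv p v) a]
      simp [add_comm]
    rw [h1]
    unfold qfun
    apply intervalIntegral.integral_mono_on hb (hInv_intervalIntegrable hp 0 b)
    · exact ((hInv_mono hp).comp (by intro x y h; dsimp; linarith : Monotone (· + a))).intervalIntegrable
    · intro u _
      exact hInv_mono hp (by linarith)
  linarith

lemma qfun_sum_le {n : ℕ} (f : Fin n → ℝ) (hf : ∀ i, 0 ≤ f i) :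
    ∑ i, qfun p (f i) ≤ qfun p (∑ i, f i) := by
  classical
  induction (Finset.univ : Finset (Fin n)) using Finset.induction_on with
  | empty => simp [qfun_zero hp]
  | @insert a s hx ih =>
    rw [Finset.sum_insert hx, Finset.sum_insert hx]
    calc qfun p (f a) + ∑ i ∈ s, qfun p (f i) ≤ qfun p (f a) + qfun p (∑ i ∈ s, f i) := by
          linarith
      _ ≤ qfun p (f a + ∑ i ∈ s, f i) :=
          qfun_superadd hp (hf a) (Finset.sum_nonneg fun i _ => hf i)
end

lemma norm2_nonneg {n : ℕ} (v : Fin n → ℝ) : 0 ≤ norm2 v := Real.sqrt_nonneg _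

lemma norm2_sq {n : ℕ} (v : Fin n → ℝ) : norm2 v ^ 2 = ∑ i, v i ^ 2 :=
  Real.sq_sqrt (Finset.sum_nonneg fun i _ => sq_nonneg _)

lemma norm2_eq_zero {n : ℕ} {v : Fin n → ℝ} (h : norm2 v = 0) : v = 0 := by
  have h2 : ∑ i, v i ^ 2 = 0 := by
    have := norm2_sq v
    rw [h] at this
    simpa using this.symm
  funext i
  have := (Finset.sum_eq_zero_iff_of_nonneg (fun i _ => sq_nonneg (v i))).mp h2 i (Finset.mem_univ i)
  exact pow_eq_zero_iff (by norm_num) |>.mp this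

lemma norm2_pos {n : ℕ} {v : Fin n → ℝ} (h : v ≠ 0) : 0 < norm2 v :=
  lt_of_le_of_ne (norm2_nonneg v) (fun hc => h (norm2_eq_zero hc.symm))

lemma norm2_smul {n : ℕ} (c : ℝ) (v : Fin n → ℝ) : norm2 (c • v) = |c| * norm2 v := by
  unfold norm2
  have : ∑ i, (c • v) i ^ 2 = c ^ 2 * ∑ i, v i ^ 2 := by
    rw [Finset.mul_sum]
    congr 1; funext i
    simp [mul_pow]
  rw [this, Real.sqrt_mul (sq_nonneg c), Real.sqrt_sq_eq_abs]

lemma norm2_continuous {n : ℕ} : Continuous (fun v : Fin n → ℝ => norm2 v) := by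
  unfold norm2
  exact Real.continuous_sqrt.comp (continuous_finset_sum _ fun i _ => (continuous_apply i).pow 2)

lemma norm1_le_sqrt_mul_norm2 {n : ℕ} (v : Fin n → ℝ) :
    norm1 v ≤ Real.sqrt n * norm2 v := by
  have h1 : (norm1 v) ^ 2 ≤ (n : ℝ) * ∑ i, v i ^ 2 := by
    have := sq_sum_le_card_mul_sum_sq (s := Finset.univ) (f := fun i => |v i|)
    simpa [sq_abs, norm1] using this
  have h2 : norm1 v = Real.sqrt ((norm1 v) ^ 2) :=
    (Real.sqrt_sq (Finset.sum_nonneg fun i _ => abs_nonneg _)).symm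
  rw [h2]
  calc Real.sqrt ((norm1 v) ^ 2) ≤ Real.sqrt ((n : ℝ) * ∑ i, v i ^ 2) := Real.sqrt_le_sqrt h1
    _ = Real.sqrt n * norm2 v := Real.sqrt_mul (Nat.cast_nonneg n) _

-- Cauchy-Schwarz for dot products
lemma dot_le_norm2_mul_norm2 {n : ℕ} (v w : Fin n → ℝ) :
    ∑ i, v i * w i ≤ norm2 v * norm2 w := by
  exact Real.sum_mul_le_sqrt_mul_sqrt _ _ _

section
variable {m N : ℕ}

-- mulVec injective when rank = number of columns
lemma mulVec_injective_of_rank {n k : ℕ} {B : Matrix (Fin n) (Fin k) ℝ} (hB : B.rank = k) :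
    Function.Injective B.mulVec := by
  have h1 : LinearMap.ker B.mulVecLin = ⊥ := by
    have h2 := B.mulVecLin.finrank_range_add_finrank_ker
    rw [show Module.finrank ℝ (Fin k → ℝ) = k from Module.finrank_fin_fun ℝ] at h2
    have h3 : Module.finrank ℝ (LinearMap.range B.mulVecLin) = k := hB
    have h4 : Module.finrank ℝ (LinearMap.ker B.mulVecLin) = 0 := by omega
    exact Submodule.finrank_eq_zero.mp h4
  exact LinearMap.ker_eq_bot.mp h1

-- mulVec surjective when rank = number of rows
lemma mulVec_surjective_of_rank {n k : ℕ} {B : Matrix (Fin n) (Fin k) ℝ} (hB : B.rank = n) :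
    Function.Surjective B.mulVec := by
  have h1 : LinearMap.range B.mulVecLin = ⊤ := by
    apply Submodule.eq_top_of_finrank_eq
    rw [show Module.finrank ℝ (Fin n → ℝ) = n from Module.finrank_fin_fun ℝ]
    exact hB
  exact LinearMap.range_eq_top.mp h1

variable (A : Matrix (Fin m) (Fin N) ℝ)

def sigSet : Set ℝ := {c : ℝ | ∃ z : Fin m → ℝ, norm2 z = 1 ∧ c = norm2 (A.transpose.mulVec z)}

lemma sigSet_eq_image :
    sigSet A = (fun z : Fin m → ℝ => norm2 (A.transpose.mulVec z)) '' {z | norm2 z = 1} := by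
  ext c
  constructor
  · rintro ⟨z, hz, rfl⟩; exact ⟨z, hz, rfl⟩
  · rintro ⟨z, hz, rfl⟩; exact ⟨z, hz, rfl⟩

lemma sphere_compact (hm : 1 ≤ m) : IsCompact {z : Fin m → ℝ | norm2 z = 1} := by
  apply Metric.isCompact_of_isClosed_isBounded
  · exact isClosed_eq norm2_continuous continuous_const
  · rw [Metric.isBounded_iff_subset_closedBall 0]
    refine ⟨1, fun z hz => ?_⟩
    simp only [Metric.mem_closedBall, dist_zero_right]
    rw [pi_norm_le_iff_of_nonneg (by norm_num)]
    intro i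
    have h1 : z i ^ 2 ≤ ∑ j, z j ^ 2 :=
      Finset.single_le_sum (fun j _ => sq_nonneg (z j)) (Finset.mem_univ i)
    have h2 : ∑ j, z j ^ 2 = 1 := by
      have := norm2_sq z; rw [Set.mem_setOf_eq.mp hz] at this; simpa using this.symm
    rw [Real.norm_eq_abs, ← Real.sqrt_sq_eq_abs]
    calc Real.sqrt (z i ^ 2) ≤ Real.sqrt 1 := Real.sqrt_le_sqrt (by rw [← h2] at *; linarith)
      _ = 1 := Real.sqrt_one

lemma sigmaMin_pos (hm : 1 ≤ m) (hA : A.rank = m) : 0 < sigmaMin A := by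
  have hinj : Function.Injective A.transpose.mulVec :=
    mulVec_injective_of_rank (by rw [Matrix.rank_transpose]; exact hA)
  have hcont : Continuous (fun z : Fin m → ℝ => norm2 (A.transpose.mulVec z)) := by
    apply norm2_continuous.comp
    exact LinearMap.continuous_on_pi A.transpose.mulVecLin
  have hne : {z : Fin m → ℝ | norm2 z = 1}.Nonempty := by
    refine ⟨fun j => if j = ⟨0, hm⟩ then (1:ℝ) else 0, ?_⟩
    have hsum : ∑ i : Fin m, (if i = (⟨0, hm⟩ : Fin m) then (1:ℝ) else 0) ^ 2 = 1 := by
      rw [Finset.sum_eq_single (⟨0, hm⟩ : Fin m)]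
      · simp
      · intro b _ hb; simp [hb]
      · simp
    simp only [Set.mem_setOf_eq]
    unfold norm2
    rw [hsum]
    exact Real.sqrt_one
  have hcomp : IsCompact (sigSet A) := by
    rw [sigSet_eq_image]
    exact (sphere_compact hm).image hcont
  have hne2 : (sigSet A).Nonempty := by
    obtain ⟨z, hz⟩ := hne
    exact ⟨_, z, hz, rfl⟩
  have hmem : sInf (sigSet A) ∈ sigSet A := hcomp.sInf_mem hne2
  obtain ⟨z, hz1, hz2⟩ := hmem
  have hz0 : z ≠ 0 := by
    intro h; rw [h] at hz1
    have : norm2 (0 : Fin m → ℝ) = 0 := by unfold norm2; simp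
    rw [this] at hz1; norm_num at hz1
  have : A.transpose.mulVec z ≠ 0 := by
    intro h
    apply hz0
    apply hinj
    rw [h, Matrix.mulVec_zero]
  have : 0 < norm2 (A.transpose.mulVec z) := norm2_pos this
  unfold sigmaMin
  rw [show {c : ℝ | ∃ z : Fin m → ℝ, norm2 z = 1 ∧ c = norm2 (A.transpose.mulVec z)} = sigSet A
    from rfl]
  linarith [hz2 ▸ this]

lemma sigmaMin_le (hm : 1 ≤ m) (w : Fin m → ℝ) :
    sigmaMin A * norm2 w ≤ norm2 (A.transpose.mulVec w) := by
  by_cases hw : w = 0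
  · subst hw
    have h0 : ∀ {k : ℕ}, norm2 (0 : Fin k → ℝ) = 0 := by intro k; unfold norm2; simp
    rw [Matrix.mulVec_zero, h0, h0, mul_zero]
  · have hpos : 0 < norm2 w := norm2_pos hw
    set u : Fin m → ℝ := (norm2 w)⁻¹ • w with hu
    have hu1 : norm2 u = 1 := by
      rw [hu, norm2_smul, abs_of_pos (by positivity)]
      field_simp
    have hmem : norm2 (A.transpose.mulVec u) ∈ sigSet A := ⟨u, hu1, rfl⟩
    have hbdd : BddBelow (sigSet A) := by
      refine ⟨0, fun c hc => ?_⟩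
      obtain ⟨z, _, rfl⟩ := hc
      exact norm2_nonneg _
    have h1 : sigmaMin A ≤ norm2 (A.transpose.mulVec u) := csInf_le hbdd hmem
    have h2 : norm2 (A.transpose.mulVec u) = (norm2 w)⁻¹ * norm2 (A.transpose.mulVec w) := by
      rw [hu, Matrix.mulVec_smul, norm2_smul, abs_of_pos (by positivity)]
    rw [h2] at h1
    calc sigmaMin A * norm2 w ≤ ((norm2 w)⁻¹ * norm2 (A.transpose.mulVec w)) * norm2 w := by
          exact mul_le_mul_of_nonneg_right h1 (le_of_lt hpos)
      _ = norm2 (A.transpose.mulVec w) := by field_simp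
end


/-- Lemma `q_infty_bound`: ‖q*‖_∞ ≤ ‖m*‖₁ ≤ (√N/σ_min(A))‖y‖₂,
where q* is the minimizer of Q_p over {z : Az = y} and m* the minimizer of Q_p over
𝒰(A,y). -/
theorem stmt10 (m N : ℕ) (hm : 1 ≤ m) (hmN : m < N)
    (A : Matrix (Fin m) (Fin N) ℝ) (hA : A.rank = m)
    (y : Fin m → ℝ) (p : ℝ) (hp : 2 ≤ p) (α : ℝ) (hα : 0 < α)
    (qstar mstar : Fin N → ℝ)
    (hq1 : A.mulVec qstar = y)
    (hq2 : ∀ z : Fin N → ℝ, A.mulVec z = y → Qfun p α qstar ≤ Qfun p α z)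
    (hm1 : mstar ∈ BPset A y)
    (hm2 : ∀ z ∈ BPset A y, Qfun p α mstar ≤ Qfun p α z) :
    normInf qstar ≤ norm1 mstar ∧
    norm1 mstar ≤ Real.sqrt N / sigmaMin A * norm2 y := by
  have hN : 0 < N := lt_trans (by omega : 0 < m) hmN
  haveI : Nonempty (Fin N) := ⟨⟨0, hN⟩⟩
  set β : ℝ := α ^ p with hβdef
  have hβ : 0 < β := Real.rpow_pos_of_pos hα p
  constructor
  · -- Part 1
    apply ciSup_le
    intro i
    -- main chain
    have step1 : qfun p (|qstar i| / β) ≤ ∑ j, qfun p (qstar j / β) := by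
      have e1 : qfun p (|qstar i| / β) = qfun p (qstar i / β) := by
        rw [← qfun_abs hp (qstar i / β)]
        congr 1
        rw [abs_div, abs_of_pos hβ]
      rw [e1]
      exact Finset.single_le_sum (f := fun j => qfun p (qstar j / β))
        (fun j _ => qfun_nonneg hp _) (Finset.mem_univ i)
    have step2 : Qfun p α qstar ≤ Qfun p α mstar := hq2 mstar hm1.1
    have step3 : ∑ j, qfun p (mstar j / β) ≤ qfun p (norm1 mstar / β) := by
      have e2 : ∀ j, qfun p (mstar j / β) = qfun p (|mstar j| / β) := by
        intro j
        rw [← qfun_abs hp (mstar j / β)]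
        congr 1
        rw [abs_div, abs_of_pos hβ]
      calc ∑ j, qfun p (mstar j / β) = ∑ j, qfun p (|mstar j| / β) := by
            exact Finset.sum_congr rfl fun j _ => e2 j
        _ ≤ qfun p (∑ j, |mstar j| / β) :=
            qfun_sum_le hp _ (fun j => by positivity)
        _ = qfun p (norm1 mstar / β) := by rw [← Finset.sum_div]; rfl
    have key : qfun p (|qstar i| / β) ≤ qfun p (norm1 mstar / β) := by
      have h1 : β * qfun p (|qstar i| / β) ≤ β * ∑ j, qfun p (qstar j / β) := by
        exact mul_le_mul_of_nonneg_left step1 (le_of_lt hβ)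
      have h2 : β * ∑ j, qfun p (mstar j / β) ≤ β * qfun p (norm1 mstar / β) :=
        mul_le_mul_of_nonneg_left step3 (le_of_lt hβ)
      have h3 : β * qfun p (|qstar i| / β) ≤ β * qfun p (norm1 mstar / β) := by
        calc β * qfun p (|qstar i| / β) ≤ Qfun p α qstar := h1
          _ ≤ Qfun p α mstar := step2
          _ ≤ β * qfun p (norm1 mstar / β) := h2
      exact le_of_mul_le_mul_left h3 hβ
    -- conclude |qstar i| ≤ norm1 mstar
    have hnorm1nn : 0 ≤ norm1 mstar := Finset.sum_nonneg fun j _ => abs_nonneg _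
    by_contra hcon
    push_neg at hcon
    have : qfun p (norm1 mstar / β) < qfun p (|qstar i| / β) := by
      apply qfun_strictMonoOn hp (Set.mem_Ici.mpr (by positivity))
        (Set.mem_Ici.mpr (by positivity))
      exact (div_lt_div_iff_of_pos_right hβ).mpr hcon
    linarith
  · -- Part 2
    have hσ : 0 < sigmaMin A := sigmaMin_pos A hm hA
    have hrank : (A * A.transpose).rank = m := by
      rw [Matrix.rank_self_mul_transpose]; exact hA
    obtain ⟨w, hw⟩ := mulVec_surjective_of_rank hrank y
    set z : Fin N → ℝ := A.transpose.mulVec w with hz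
    have hfeas : A.mulVec z = y := by
      rw [hz, Matrix.mulVec_mulVec]; exact hw
    have h1 : norm1 mstar ≤ norm1 z := hm1.2 z hfeas
    have h2 : norm1 z ≤ Real.sqrt N * norm2 z := norm1_le_sqrt_mul_norm2 z
    -- norm2 z ^ 2 = w ⬝ y
    have h3 : norm2 z ^ 2 = ∑ j, w j * y j := by
      rw [norm2_sq]
      have e : ∑ j, w j * y j = dotProduct w (A.mulVec z) := by
        rw [hfeas]; rfl
      rw [e, Matrix.dotProduct_mulVec]
      have hvm : Matrix.vecMul w A = z := by
        rw [hz, Matrix.mulVec_transpose]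
      rw [hvm]
      simp [dotProduct, sq]
    have h4 : ∑ j, w j * y j ≤ norm2 w * norm2 y := dot_le_norm2_mul_norm2 w y
    have h5 : sigmaMin A * norm2 w ≤ norm2 z := by
      rw [hz]; exact sigmaMin_le A hm w
    have h6 : norm2 z ≤ norm2 y / sigmaMin A := by
      rcases eq_or_lt_of_le (norm2_nonneg z) with hz0 | hz0
      · rw [← hz0]; exact div_nonneg (norm2_nonneg y) (le_of_lt hσ)
      · have hw2 : norm2 w ≤ norm2 z / sigmaMin A := by
          rw [le_div_iff₀ hσ]; linarith
        have : norm2 z ^ 2 ≤ (norm2 z / sigmaMin A) * norm2 y := by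
          calc norm2 z ^ 2 ≤ norm2 w * norm2 y := le_trans (le_of_eq h3) h4
            _ ≤ (norm2 z / sigmaMin A) * norm2 y :=
                mul_le_mul_of_nonneg_right hw2 (norm2_nonneg y)
        rw [div_mul_eq_mul_div, le_div_iff₀ hσ] at this
        rw [le_div_iff₀ hσ]
        nlinarith
    calc norm1 mstar ≤ Real.sqrt N * norm2 z := le_trans h1 h2
      _ ≤ Real.sqrt N * (norm2 y / sigmaMin A) :=
          mul_le_mul_of_nonneg_left h6 (Real.sqrt_nonneg _)
      _ = Real.sqrt N / sigmaMin A * norm2 y := by ring
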